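/- Let K be an order-enriched category with coinserters of reflexive pairs. Then every object G of K that has copowers has tensors: for every poset P there is an object P⊗G of K together with order-isomorphisms K(P⊗G, X) ≅ Pos(P, K(G,X)), natural in X. -/

import Mathlib

open CategoryTheory

universe v u

namespace Paper

/- An order-enriched category: a category with a partial order on each hom-set
such that composition is monotone in both variables. -/
variable {K : Type u} [Category.{v} K] [∀ X Y : K, PartialOrder (X ⟶ Y)]

/-- Composition is monotone in both variables. -/
def CompMonotone (K : Type u) [Category.{v} K] [∀ X Y : K, PartialOrder (X ⟶ Y)] : Prop :=
  ∀ (X Y Z : K) (f f' : X ⟶ Y) (g g' : Y ⟶ Z), f ≤ f' → g ≤ g' → f ≫ g ≤ f' ≫ g'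

/-- `c` is a coinserter of the parallel pair `f0, f1`. -/
def IsCoinserterOf {X Y Z : K} (f0 f1 : X ⟶ Y) (c : Y ⟶ Z) : Prop :=
  f0 ≫ c ≤ f1 ≫ c ∧
    (∀ (Z' : K) (c' : Y ⟶ Z'), f0 ≫ c' ≤ f1 ≫ c' → ∃ g : Z ⟶ Z', c ≫ g = c') ∧
    (∀ (U : K) (u0 u1 : Z ⟶ U), c ≫ u0 ≤ c ≫ u1 → u0 ≤ u1)

/-- A reflexive pair: a parallel pair with a joint splitting. -/
def ReflexivePair {X Y : K} (f0 f1 : X ⟶ Y) : Prop :=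
  ∃ d : Y ⟶ X, d ≫ f0 = 𝟙 Y ∧ d ≫ f1 = 𝟙 Y

/-- A subregular epimorphism: a coinserter of a reflexive pair. -/
def IsSubregularEpi {Y Z : K} (c : Y ⟶ Z) : Prop :=
  ∃ (X : K) (f0 f1 : X ⟶ Y), ReflexivePair f0 f1 ∧ IsCoinserterOf f0 f1 c

/-- `G` is a subregular projective: morphisms from `G` factor through subregular
epimorphisms. -/
def SubregularProjective (G : K) : Prop :=
  ∀ (A B : K) (e : A ⟶ B), IsSubregularEpi e → ∀ g : G ⟶ B, ∃ f : G ⟶ A, f ≫ e = g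

/-- `r0, r1` is collectively order-reflecting. -/
def CollOrderReflecting {R A : K} (r0 r1 : R ⟶ A) : Prop :=
  ∀ (X : K) (f f' : X ⟶ R), f ≫ r0 ≤ f' ≫ r0 → f ≫ r1 ≤ f' ≫ r1 → f ≤ f'

/-- `r0, r1` is the subkernel pair of `h`: the universal pair with `h∘r0 ≤ h∘r1`. -/
def IsSubkernelPairOf {R A B : K} (r0 r1 : R ⟶ A) (h : A ⟶ B) : Prop :=
  CollOrderReflecting r0 r1 ∧ r0 ≫ h ≤ r1 ≫ h ∧
    ∀ (V : K) (v0 v1 : V ⟶ A), v0 ≫ h ≤ v1 ≫ h →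
      ∃ t : V ⟶ R, t ≫ r0 = v0 ∧ t ≫ r1 = v1

def HasSubkernelPairs (K : Type u) [Category.{v} K]
    [∀ X Y : K, PartialOrder (X ⟶ Y)] : Prop :=
  ∀ (A B : K) (h : A ⟶ B), ∃ (R : K) (r0 r1 : R ⟶ A), IsSubkernelPairOf r0 r1 h

def HasCoinsertersOfSubkernelPairs (K : Type u) [Category.{v} K]
    [∀ X Y : K, PartialOrder (X ⟶ Y)] : Prop :=
  ∀ (R A B : K) (h : A ⟶ B) (r0 r1 : R ⟶ A), IsSubkernelPairOf r0 r1 h →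
    ∃ (C : K) (c : A ⟶ C), IsCoinserterOf r0 r1 c

def HasReflexiveCoinserters (K : Type u) [Category.{v} K]
    [∀ X Y : K, PartialOrder (X ⟶ Y)] : Prop :=
  ∀ (X Y : K) (f0 f1 : X ⟶ Y), ReflexivePair f0 f1 →
    ∃ (Z : K) (c : Y ⟶ Z), IsCoinserterOf f0 f1 c

/-- `G` is a strong generator in the enriched sense: the hom-functor
`K(G,−) : K → Pos` reflects isomorphisms. -/
def StrongGeneratorE (G : K) : Prop :=
  ∀ (A B : K) (h : A ⟶ B),
    Function.Bijective (fun f : G ⟶ A => f ≫ h) →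
    (∀ f f' : G ⟶ A, f ≫ h ≤ f' ≫ h ↔ f ≤ f') → IsIso h

/-- `C` with injections `ι` is a copower `M·G` in the enriched sense: the canonical
map `K(M·G, X) → K(G,X)^M` is an order-isomorphism. -/
def IsEnrCopower (G : K) (M : Type v) (C : K) (ι : M → (G ⟶ C)) : Prop :=
  (∀ (X : K) (g : M → (G ⟶ X)), ∃! d : C ⟶ X, ∀ m, ι m ≫ d = g m) ∧
  (∀ (X : K) (d d' : C ⟶ X), (∀ m, ι m ≫ d ≤ ι m ≫ d') → d ≤ d')

/-- `G` has copowers (with the enriched universal property). -/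
def HasEnrCopowers (G : K) : Prop :=
  ∀ M : Type v, ∃ (C : K) (ι : M → (G ⟶ C)), IsEnrCopower G M C ι

/-- `G` is abstractly finite: every morphism from `G` into a copower `M·G` factors
through the subcopower induced by a finite subset `M₀ ⊆ M`. -/
def AbstractlyFiniteE (G : K) : Prop :=
  ∀ (M : Type v) (C : K) (ι : M → (G ⟶ C)), IsEnrCopower G M C ι →
    ∀ f : G ⟶ C, ∃ M₀ : Set M, M₀.Finite ∧
      ∀ (C₀ : K) (ι₀ : M₀ → (G ⟶ C₀)) (u : C₀ ⟶ C),
        IsEnrCopower G M₀ C₀ ι₀ → (∀ m : M₀, ι₀ m ≫ u = ι m.1) →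
          ∃ g : G ⟶ C₀, g ≫ u = f

/-- A subvarietal generator: a strong generator with copowers which is abstractly
finite and subregularly projective. -/
def SubvarietalGenerator (G : K) : Prop :=
  HasEnrCopowers G ∧ StrongGeneratorE G ∧ AbstractlyFiniteE G ∧ SubregularProjective G

/-- The pair `s0, s1` factorizes through the relation `r0, r1`. -/
def FactorsE {R A S : K} (r0 r1 : R ⟶ A) (s0 s1 : S ⟶ A) : Prop :=
  ∃ t : S ⟶ R, t ≫ r0 = s0 ∧ t ≫ r1 = s1

/-- A subcongruence: an order-reflexive and transitive relation. -/
def IsSubcongruence {R A : K} (r0 r1 : R ⟶ A) : Prop :=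
  CollOrderReflecting r0 r1 ∧
  (∀ (S : K) (s0 s1 : S ⟶ A), s0 ≤ s1 → FactorsE r0 r1 s0 s1) ∧
  (∀ (S : K) (s s' s'' : S ⟶ A),
    FactorsE r0 r1 s s' → FactorsE r0 r1 s' s'' → FactorsE r0 r1 s s'')

def HasCoinsertersOfSubcongruences (K : Type u) [Category.{v} K]
    [∀ X Y : K, PartialOrder (X ⟶ Y)] : Prop :=
  ∀ (R A : K) (r0 r1 : R ⟶ A), IsSubcongruence r0 r1 →
    ∃ (C : K) (c : A ⟶ C), IsCoinserterOf r0 r1 c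

/-- `K` has effective subcongruences: every subcongruence is a subkernel pair. -/
def EffectiveSubcongruences (K : Type u) [Category.{v} K]
    [∀ X Y : K, PartialOrder (X ⟶ Y)] : Prop :=
  ∀ (R A : K) (r0 r1 : R ⟶ A), IsSubcongruence r0 r1 →
    ∃ (B : K) (h : A ⟶ B), IsSubkernelPairOf r0 r1 h

/-- A coinserter diagram in `Pos`. -/
def IsCoinserterOfPos {P Q Z : Type v} [PartialOrder P] [PartialOrder Q] [PartialOrder Z]
    (u v : P → Q) (q : Q → Z) : Prop :=
  (∀ p, q (u p) ≤ q (v p)) ∧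
  (∀ (Z' : Type v) [PartialOrder Z'] (h : Q →o Z'), (∀ p, h (u p) ≤ h (v p)) →
      ∃ k : Z → Z', Monotone k ∧ ∀ x, k (q x) = h x) ∧
  (∀ (Z' : Type v) [PartialOrder Z'] (k0 k1 : Z →o Z'),
      (∀ x, k0 (q x) ≤ k1 (q x)) → k0 ≤ k1)

/-- `G` is subeffective: its hom-functor `K(G,−) : K → Pos` sends coinserters of
subcongruences to coinserters in `Pos`. -/
def SubeffectiveObject (G : K) : Prop :=
  ∀ (R A : K) (r0 r1 : R ⟶ A), IsSubcongruence r0 r1 →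
    ∀ (C : K) (c : A ⟶ C), IsCoinserterOf r0 r1 c →
      IsCoinserterOfPos (fun f : G ⟶ R => f ≫ r0) (fun f : G ⟶ R => f ≫ r1)
        (fun g : G ⟶ A => g ≫ c)

/-- `m` is an embedding: `m∘u0 ≤ m∘u1` implies `u0 ≤ u1`. -/
def EmbeddingMor {C B : K} (m : C ⟶ B) : Prop :=
  ∀ (U : K) (u0 u1 : U ⟶ C), u0 ≫ m ≤ u1 ≫ m → u0 ≤ u1

/-- The square with projections `f', e'` is a pullback of `e` along `f`. -/
def IsPullbackOfE {P A B Q : K} (f' : P ⟶ A) (e' : P ⟶ B) (e : A ⟶ Q) (f : B ⟶ Q) : Prop :=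
  f' ≫ e = e' ≫ f ∧
    ∀ (S : K) (a : S ⟶ A) (b : S ⟶ B), a ≫ e = b ≫ f →
      ∃! t : S ⟶ P, t ≫ f' = a ∧ t ≫ e' = b

/-- in an order-enriched category with coinserters of reflexive pairs,
every object with copowers has tensors: for every poset `P` there is an object `P⊗G`
with order-isomorphisms `K(P⊗G, X) ≅ Pos(P, K(G,X))` natural in `X`. -/
theorem stmt14 {K : Type u} [Category.{v} K] [∀ X Y : K, PartialOrder (X ⟶ Y)]
    (hcomp : CompMonotone K) (hcoins : HasReflexiveCoinserters K)
    (G : K) (hcop : HasEnrCopowers G) (P : Type v) [PartialOrder P] :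
    ∃ (T : K) (φ : ∀ X : K, (T ⟶ X) → (P →o (G ⟶ X))),
      (∀ X : K, Function.Bijective (φ X)) ∧
      (∀ (X : K) (f f' : T ⟶ X), f ≤ f' ↔ φ X f ≤ φ X f') ∧
      (∀ (X X' : K) (u : X ⟶ X') (f : T ⟶ X) (p : P),
        (φ X' (f ≫ u)) p = (φ X f) p ≫ u) := by
  -- copower over P and over the order relation of P
  obtain ⟨C, ι, hC⟩ := hcop P
  obtain ⟨D, ι', hD⟩ := hcop {pq : P × P // pq.1 ≤ pq.2}
  obtain ⟨f0, hf0, -⟩ := hD.1 C (fun e => ι e.1.1)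
  obtain ⟨f1, hf1, -⟩ := hD.1 C (fun e => ι e.1.2)
  obtain ⟨d, hd, -⟩ := hC.1 D (fun p => ι' ⟨(p, p), le_refl p⟩)
  have hrefl : ReflexivePair f0 f1 := by
    obtain ⟨u, hu, huniq⟩ := hC.1 C ι
    refine ⟨d, ?_, ?_⟩
    · have h1 : d ≫ f0 = u := huniq _ (fun p => by
        rw [← Category.assoc, hd, hf0])
      have h2 : 𝟙 C = u := huniq _ (fun p => by simp)
      rw [h1, h2]
    · have h1 : d ≫ f1 = u := huniq _ (fun p => by
        rw [← Category.assoc, hd, hf1])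
      have h2 : 𝟙 C = u := huniq _ (fun p => by simp)
      rw [h1, h2]
  obtain ⟨T, c, hc⟩ := hcoins D C f0 f1 hrefl
  -- key: ι p ≫ c is monotone in p
  have hmono : ∀ {p q : P}, p ≤ q → ι p ≫ c ≤ ι q ≫ c := by
    intro p q hpq
    have h0 : ι p ≫ c = ι' ⟨(p, q), hpq⟩ ≫ (f0 ≫ c) := by
      rw [← Category.assoc, hf0]
    have h1 : ι q ≫ c = ι' ⟨(p, q), hpq⟩ ≫ (f1 ≫ c) := by
      rw [← Category.assoc, hf1]
    rw [h0, h1]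
    exact hcomp _ _ _ _ _ _ _ le_rfl hc.1
  refine ⟨T, fun X f => ⟨fun p => ι p ≫ (c ≫ f), fun p q hpq => by
    show ι p ≫ c ≫ f ≤ ι q ≫ c ≫ f
    rw [← Category.assoc, ← Category.assoc]
    exact hcomp _ _ _ _ _ _ _ (hmono hpq) le_rfl⟩, ?_, ?_, ?_⟩
  · intro X
    constructor
    · -- injective
      intro f f' hff
      have key : ∀ (g g' : T ⟶ X),
          (∀ p, ι p ≫ (c ≫ g) ≤ ι p ≫ (c ≫ g')) → g ≤ g' := by
        intro g g' h
        exact hc.2.2 X g g' (hC.2 X (c ≫ g) (c ≫ g') h)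
      have h1 : ∀ p, ι p ≫ (c ≫ f) = ι p ≫ (c ≫ f') := fun p =>
        congrArg (fun (h : P →o (G ⟶ X)) => h p) hff
      exact le_antisymm (key f f' (fun p => (h1 p).le))
        (key f' f (fun p => (h1 p).ge))
    · -- surjective
      intro g
      obtain ⟨dX, hdX, -⟩ := hC.1 X (fun p => g p)
      have hle : f0 ≫ dX ≤ f1 ≫ dX := by
        apply hD.2
        intro e
        have h0 : ι' e ≫ (f0 ≫ dX) = g e.1.1 := by
          rw [← Category.assoc, hf0, hdX]
        have h1 : ι' e ≫ (f1 ≫ dX) = g e.1.2 := by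
          rw [← Category.assoc, hf1, hdX]
        rw [h0, h1]
        exact g.monotone e.2
      obtain ⟨h, hh⟩ := hc.2.1 X dX hle
      refine ⟨h, ?_⟩
      ext p
      simp only [OrderHom.coe_mk]
      show ι p ≫ c ≫ h = g p
      rw [hh, hdX]
  · intro X f f'
    constructor
    · intro hle p
      simp only [OrderHom.coe_mk]
      exact hcomp _ _ _ _ _ _ _ le_rfl (hcomp _ _ _ _ _ _ _ le_rfl hle)
    · intro hle
      exact hc.2.2 X f f' (hC.2 X (c ≫ f) (c ≫ f') (fun p => hle p))
  · intro X X' u f p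
    show ι p ≫ c ≫ f ≫ u = (ι p ≫ c ≫ f) ≫ u
    simp [Category.assoc]

end Paper
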